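/- Suppose gcd(m/i, n/j) = t and ν has a generating sequence Q_0 = X, Q_1 = Y, Q_2, … in which every Q_l is an eigenfunction for H_{i,j,t,x}. Let ν̄ be the restriction of ν to the quotient field Q(A_{i,j,t,x}) of A_{i,j,t,x}, and let Γ_ν̄ be the value group of ν̄, i.e. the subgroup of ℚ generated by S^{(A_{i,j,t,x})_𝔫}(ν). If γ_1 = ν(Y) ∈ Γ_ν̄, then n = j and t = 1. -/
import Mathlib


open MvPolynomial Finset Pointwise

noncomputable section

namespace DuttaPaper

/-- The polynomial ring `K[X,Y]`, with `X = X 0` and `Y = X 1`. -/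
abbrev Poly (K : Type) [Field K] : Type := MvPolynomial (Fin 2) K

/-- The rational function field `K(X,Y)`. -/
abbrev RF (K : Type) [Field K] : Type := FractionRing (Poly K)

variable {K : Type} [Field K]

/-- The `K`-algebra endomorphism of `K[X,Y]` sending `X ↦ u • X`, `Y ↦ v • Y`;
this is the action of `(u,v) ∈ 𝕌_m × 𝕌_n` on `K[X,Y]`. -/
def act (u v : K) : Poly K →ₐ[K] Poly K :=
  MvPolynomial.aeval ![MvPolynomial.C u * MvPolynomial.X 0,
    MvPolynomial.C v * MvPolynomial.X 1]

/-- Membership in the set `H_{i,j,t,x} = {(α^{a i}, β^{b j}) : b ≡ a x (mod t)} ⊆ K × K`. -/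
def Hmem (α β : K) (i j t x : ℕ) (p : K × K) : Prop :=
  ∃ a b : ℤ, b ≡ a * (x : ℤ) [ZMOD (t : ℤ)] ∧
    p = (α ^ (a * (i : ℤ)), β ^ (b * (j : ℤ)))

/-- `f ∈ K[X,Y]` is an eigenfunction for `H_{i,j,t,x}`. -/
def IsEigen (α β : K) (i j t x : ℕ) (f : Poly K) : Prop :=
  ∀ p : K × K, Hmem α β i j t x p → ∃ lam : K, act p.1 p.2 f = lam • f

/-- `f ∈ K[X,Y]` belongs to the invariant ring `A_{i,j,t,x} = K[X,Y]^{H_{i,j,t,x}}`. -/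
def Invariant (α β : K) (i j t x : ℕ) (f : Poly K) : Prop :=
  ∀ p : K × K, Hmem α β i j t x p → act p.1 p.2 f = f

/-- A `ℚ`-valued (rational rank 1) valuation on a field `L`: the data of the values of the
nonzero elements (the value of `0` is irrelevant). -/
structure RatVal (L : Type) [Field L] where
  v : L → ℚ
  v_mul : ∀ a b : L, a ≠ 0 → b ≠ 0 → v (a * b) = v a + v b
  v_add : ∀ a b : L, a ≠ 0 → b ≠ 0 → a + b ≠ 0 → min (v a) (v b) ≤ v (a + b)

/-- Value of a polynomial under a valuation of `K(X,Y)`. -/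
def vP (ν : RatVal (RF K)) (f : Poly K) : ℚ :=
  ν.v (algebraMap (Poly K) (RF K) f)

/-- `ν` dominates `R_𝔪 = K[X,Y]_{(X,Y)}` : `ν ≥ 0` on `R_𝔪` and `ν > 0` on its maximal
ideal (expressed on the level of polynomials). -/
def DominatesRm (ν : RatVal (RF K)) : Prop :=
  (∀ f : Poly K, f ≠ 0 → 0 ≤ vP ν f) ∧
  (∀ f : Poly K, f ≠ 0 → MvPolynomial.constantCoeff f = 0 → 0 < vP ν f)

/-- `ν` is non-discrete: its value group is not a cyclic subgroup of `ℚ`. -/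
def Nondiscrete (ν : RatVal (RF K)) : Prop :=
  ¬ ∃ g : ℚ, ∀ z : RF K, z ≠ 0 → ∃ k : ℤ, ν.v z = (k : ℚ) * g

/-- Data of a candidate generating sequence: the polynomials `Q_l` and the numbers `m̄_l`. -/
structure GSData (K : Type) [Field K] where
  Q : ℕ → Poly K
  mbar : ℕ → ℕ

/-- `γ_l = ν(Q_l)`. -/
def GSData.γ (G : GSData K) (ν : RatVal (RF K)) (l : ℕ) : ℚ := vP ν (G.Q l)

/-- `d(l) = m̄_1 ⋯ m̄_{l-1}` (so `d(1) = 1`). -/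
def GSData.d (G : GSData K) (l : ℕ) : ℕ := ∏ k ∈ Finset.Icc 1 (l - 1), G.mbar k

/-- An exponent vector `e` is admissible when `e k < m̄_k` for all `k ≥ 1`. -/
def Adm (G : GSData K) (e : ℕ →₀ ℕ) : Prop := ∀ k, 1 ≤ k → e k < G.mbar k

/-- The monomial `X^{e 0} Q_1^{e 1} Q_2^{e 2} ⋯` in the generating sequence. -/
def Pmon (G : GSData K) (e : ℕ →₀ ℕ) : Poly K := e.prod fun k a => G.Q k ^ a

/-- The value `Σ_k e k • γ_k` of such a monomial. -/
def evalγ (ν : RatVal (RF K)) (G : GSData K) (e : ℕ →₀ ℕ) : ℚ :=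
  e.sum fun k a => (a : ℚ) * G.γ ν k

/-- `(Q_l)_{l≥0}` is a generating sequence for `ν` in `K[X,Y]` (properties (1)–(4) of
Section 2 of the paper, for the algorithm of Cutkosky–Vinh). -/
structure IsGenSeq (ν : RatVal (RF K)) (G : GSData K) : Prop where
  hQ0 : G.Q 0 = MvPolynomial.X 0
  hQ1 : G.Q 1 = MvPolynomial.X 1
  /-- `m̄_l ≥ 1`. -/
  hmbar_pos : ∀ l, 1 ≤ l → 0 < G.mbar l
  /-- `m̄_l γ_l ∈ G(γ_0, …, γ_{l-1})`. -/
  hmbar_mem : ∀ l, 1 ≤ l → ∃ c : ℕ → ℤ,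
      (G.mbar l : ℚ) * G.γ ν l = ∑ k ∈ Finset.range l, (c k : ℚ) * G.γ ν k
  /-- `m̄_l` is minimal with this property. -/
  hmbar_min : ∀ l, 1 ≤ l → ∀ q : ℕ, 0 < q →
      (∃ c : ℕ → ℤ, (q : ℚ) * G.γ ν l = ∑ k ∈ Finset.range l, (c k : ℚ) * G.γ ν k) →
      G.mbar l ≤ q
  /-- (1) `γ_{l+1} > m̄_l γ_l`. -/
  hgrowth : ∀ l, 1 ≤ l → (G.mbar l : ℚ) * G.γ ν l < G.γ ν (l + 1)
  /-- (2) `Q_l = Y^{d(l)} + (terms of lower Y-degree)`. -/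
  hmonic : ∀ l, 1 ≤ l →
      G.Q l - MvPolynomial.X 1 ^ G.d l = 0 ∨
      MvPolynomial.degreeOf 1 (G.Q l - MvPolynomial.X 1 ^ G.d l) < G.d l
  /-- (3), existence and uniqueness of the expansion of any nonzero `f` in terms of the
  admissible monomials `X^{e 0} Q_1^{e 1} ⋯ Q_r^{e r}`, `e k < m̄_k` for `k ≥ 1`. -/
  hexpand : ∀ f : Poly K, f ≠ 0 →
      ∃! c : (ℕ →₀ ℕ) →₀ K,
        (∀ e ∈ c.support, Adm G e) ∧
        f = c.sum fun e a => MvPolynomial.C a * Pmon G e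
  /-- (3), the nonzero terms of the expansion have pairwise distinct values and
  `ν(f)` is the minimum of those values. -/
  hval : ∀ f : Poly K, f ≠ 0 → ∀ c : (ℕ →₀ ℕ) →₀ K,
      (∀ e ∈ c.support, Adm G e) →
      f = (c.sum fun e a => MvPolynomial.C a * Pmon G e) →
      (∀ e ∈ c.support, ∀ e' ∈ c.support, evalγ ν G e = evalγ ν G e' → e = e') ∧
      ∃ e₀ ∈ c.support, vP ν f = evalγ ν G e₀ ∧
        ∀ e ∈ c.support, evalγ ν G e₀ ≤ evalγ ν G e
  /-- (4) `Q_{l+1} = Q_l^{m̄_l} - λ_l X^{c_0} Y^{c_1} Q_2^{c_2} ⋯ Q_{l-1}^{c_{l-1}}` with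
  `0 ≤ c_k < m̄_k` for `k ≥ 1` and `m̄_l γ_l = Σ_{k<l} c_k γ_k`. -/
  hrec : ∀ l, 1 ≤ l → ∃ lam : K, lam ≠ 0 ∧ ∃ cc : ℕ → ℕ,
      (∀ k, 1 ≤ k → k < l → cc k < G.mbar k) ∧
      G.Q (l + 1) =
        G.Q l ^ G.mbar l - MvPolynomial.C lam * ∏ k ∈ Finset.range l, G.Q k ^ cc k ∧
      (G.mbar l : ℚ) * G.γ ν l = ∑ k ∈ Finset.range l, (cc k : ℚ) * G.γ ν k

/-- The valuation semigroup `S^{R_𝔪}(ν) = {ν(h) : 0 ≠ h ∈ R_𝔪}`. -/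
def SRm (ν : RatVal (RF K)) : Set ℚ :=
  {q | ∃ f g : Poly K, f ≠ 0 ∧ MvPolynomial.constantCoeff g ≠ 0 ∧
    q = vP ν f - vP ν g}

/-- The valuation semigroup `S^{(A_{i,j,t,x})_𝔫}(ν)` of the invariant ring localized at
`𝔫 = (X,Y) ∩ A_{i,j,t,x}`. -/
def SA (ν : RatVal (RF K)) (α β : K) (i j t x : ℕ) : Set ℚ :=
  {q | ∃ f g : Poly K, f ≠ 0 ∧ Invariant α β i j t x f ∧ Invariant α β i j t x g ∧
    MvPolynomial.constantCoeff g ≠ 0 ∧ q = vP ν f - vP ν g}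

/-- `S` is a finitely generated module over the subsemigroup `T`:
`S = {s_1, …, s_k} + T` for finitely many `s_i ∈ S`. -/
def FGover (S T : Set ℚ) : Prop :=
  ∃ F : Finset ℚ, (F : Set ℚ) ⊆ S ∧ S = (F : Set ℚ) + T


/-! ### Auxiliary lemmas -/

lemma act_monomial (u v : K) (s : Fin 2 →₀ ℕ) (c : K) :
    act u v (monomial s c) = monomial s (u ^ s 0 * v ^ s 1 * c) := by
  rw [act, aeval_monomial, monomial_eq,
    Finsupp.prod_fintype _ _ (fun i => pow_zero _),
    Finsupp.prod_fintype _ _ (fun i => pow_zero _), Fin.prod_univ_two, Fin.prod_univ_two]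
  simp only [Matrix.cons_val_zero, Matrix.cons_val_one, Matrix.head_cons, mul_pow, ← C_pow,
    algebraMap_eq, map_mul]
  ring

lemma coeff_act (u v : K) (f : Poly K) (s : Fin 2 →₀ ℕ) :
    coeff s (act u v f) = u ^ s 0 * v ^ s 1 * coeff s f := by
  conv_lhs => rw [f.as_sum]
  rw [map_sum, coeff_sum]
  simp only [act_monomial, coeff_monomial]
  rw [Finset.sum_ite_eq' f.support s (fun s' => u ^ s' 0 * v ^ s' 1 * coeff s' f)]
  by_cases h : s ∈ f.support
  · simp [h]
  · simp [h, MvPolynomial.notMem_support_iff.mp h]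

lemma eig_scalar {u v lam : K} {f : Poly K} {dd : ℕ}
    (hco : coeff (Finsupp.single 1 dd) f = 1)
    (hact : act u v f = lam • f) : lam = v ^ dd := by
  have h := congrArg (coeff (Finsupp.single 1 dd)) hact
  rw [coeff_act, coeff_smul, hco, smul_eq_mul, mul_one] at h
  have h0 : (Finsupp.single (1 : Fin 2) dd) 0 = 0 := Finsupp.single_eq_of_ne (by decide)
  have h1 : (Finsupp.single (1 : Fin 2) dd) 1 = dd := Finsupp.single_eq_same
  rw [h0, h1, pow_zero, one_mul, mul_one] at h
  exact h.symm

variable {ν : RatVal (RF K)} {G : GSData K}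

lemma d_pos (hG : IsGenSeq ν G) (l : ℕ) : 0 < G.d l :=
  Finset.prod_pos fun k hk => hG.hmbar_pos k (Finset.mem_Icc.mp hk).1

lemma d_one : G.d 1 = 1 := by
  simp [GSData.d]

lemma d_succ (hG : IsGenSeq ν G) (l : ℕ) (hl : 1 ≤ l) :
    G.d (l + 1) = G.d l * G.mbar l := by
  obtain ⟨l', rfl⟩ : ∃ l', l = l' + 1 := ⟨l - 1, (Nat.succ_pred_eq_of_pos hl).symm⟩
  show ∏ k ∈ Finset.Icc 1 (l' + 1), G.mbar k = (∏ k ∈ Finset.Icc 1 l', G.mbar k) * G.mbar (l' + 1)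
  exact Finset.prod_Icc_succ_top (by omega) _

lemma coeff_top (hG : IsGenSeq ν G) (l : ℕ) (hl : 1 ≤ l) :
    coeff (Finsupp.single 1 (G.d l)) (G.Q l) = 1 := by
  have hd : 0 < G.d l := d_pos hG l
  have hco : coeff (Finsupp.single 1 (G.d l)) (MvPolynomial.X (1 : Fin 2) ^ G.d l : Poly K) = 1 := by
    rw [MvPolynomial.coeff_X_pow]; simp
  rcases hG.hmonic l hl with h | h
  · rw [sub_eq_zero] at h
    rw [h, hco]
  · have hzero : coeff (Finsupp.single 1 (G.d l)) (G.Q l - MvPolynomial.X 1 ^ G.d l) = 0 := by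
      by_contra hne
      have hmem : Finsupp.single (1 : Fin 2) (G.d l) ∈ (G.Q l - MvPolynomial.X 1 ^ G.d l).support :=
        MvPolynomial.mem_support_iff.mpr hne
      have := (MvPolynomial.degreeOf_lt_iff hd).mp h _ hmem
      simp [Finsupp.single_eq_same] at this
    have hsub : coeff (Finsupp.single (1 : Fin 2) (G.d l)) (G.Q l - MvPolynomial.X 1 ^ G.d l)
        = coeff (Finsupp.single (1 : Fin 2) (G.d l)) (G.Q l)
          - coeff (Finsupp.single (1 : Fin 2) (G.d l)) (MvPolynomial.X 1 ^ G.d l) :=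
      by rw [MvPolynomial.coeff_sub]
    rw [hzero, hco] at hsub
    linear_combination -hsub

lemma Q_ne_zero (hG : IsGenSeq ν G) (l : ℕ) : G.Q l ≠ 0 := by
  rcases Nat.eq_zero_or_pos l with rfl | hl
  · rw [hG.hQ0]; exact MvPolynomial.X_ne_zero (σ := Fin 2) (R := K) 0
  · intro h
    have := coeff_top hG l hl
    rw [h] at this
    simp at this

variable {α β : K} {i j t x : ℕ}

lemma act_Q (hG : IsGenSeq ν G) (heig : ∀ l, IsEigen α β i j t x (G.Q l))
    {p : K × K} (hp : Hmem α β i j t x p) (k : ℕ) :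
    act p.1 p.2 (G.Q k) = (if k = 0 then p.1 else p.2 ^ G.d k) • G.Q k := by
  rcases Nat.eq_zero_or_pos k with rfl | hk
  · rw [hG.hQ0, if_pos rfl, smul_eq_C_mul]
    simp [act]
  · obtain ⟨lam, hlam⟩ := heig k p hp
    rw [if_neg (by omega), hlam, eig_scalar (coeff_top hG k hk) hlam]

lemma act_prodQ (hG : IsGenSeq ν G) (heig : ∀ l, IsEigen α β i j t x (G.Q l))
    {p : K × K} (hp : Hmem α β i j t x p) (S : Finset ℕ) (cc : ℕ → ℕ) :
    act p.1 p.2 (∏ k ∈ S, G.Q k ^ cc k)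
      = (p.1 ^ (∑ k ∈ S, if k = 0 then cc k else 0)
          * p.2 ^ (∑ k ∈ S, cc k * (if k = 0 then 0 else G.d k)))
        • ∏ k ∈ S, G.Q k ^ cc k := by
  rw [map_prod]
  have h1 : ∀ k ∈ S, act p.1 p.2 (G.Q k ^ cc k)
      = C (p.1 ^ (if k = 0 then cc k else 0) * p.2 ^ (cc k * (if k = 0 then 0 else G.d k)))
        * G.Q k ^ cc k := by
    intro k _
    rw [map_pow, act_Q hG heig hp, smul_pow, smul_eq_C_mul]
    by_cases hk : k = 0
    · simp [hk]
    · simp [hk, ← pow_mul, mul_comm]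
  rw [Finset.prod_congr rfl h1, Finset.prod_mul_distrib, smul_eq_C_mul]
  congr 1
  rw [← map_prod]
  congr 1
  rw [Finset.prod_mul_distrib, Finset.prod_pow_eq_pow_sum, Finset.prod_pow_eq_pow_sum]

lemma act_C (u v a : K) : act u v (MvPolynomial.C a) = MvPolynomial.C a := by
  simp [act, MvPolynomial.algebraMap_eq]

lemma invariant_value (hG : IsGenSeq ν G) (heig : ∀ l, IsEigen α β i j t x (G.Q l))
    (f : Poly K) (hf : f ≠ 0) (hinv : Invariant α β i j t x f) :
    ∃ e : ℕ →₀ ℕ, vP ν f = evalγ ν G e ∧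
      ∀ p : K × K, Hmem α β i j t x p →
        p.1 ^ e 0 * p.2 ^ (∑ k ∈ e.support, e k * (if k = 0 then 0 else G.d k)) = 1 := by
  obtain ⟨c, ⟨hadm, hsum⟩, huniq⟩ := hG.hexpand f hf
  obtain ⟨-, e₀, he₀, hveq, -⟩ := hG.hval f hf c hadm hsum
  refine ⟨e₀, hveq, ?_⟩
  intro p hp
  set lam : (ℕ →₀ ℕ) → K := fun e =>
    p.1 ^ e 0 * p.2 ^ (∑ k ∈ e.support, e k * (if k = 0 then 0 else G.d k)) with hlam
  have hactP : ∀ e : ℕ →₀ ℕ, act p.1 p.2 (Pmon G e) = lam e • Pmon G e := by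
    intro e
    have h := act_prodQ hG heig hp e.support e
    have hsum0 : (∑ k ∈ e.support, if k = 0 then e k else 0) = e 0 := by
      rw [Finset.sum_ite_eq' e.support 0 e]
      by_cases h0 : 0 ∈ e.support
      · simp [h0]
      · simp [h0, Finsupp.notMem_support_iff.mp h0]
    have hPm : Pmon G e = ∏ k ∈ e.support, G.Q k ^ e k := rfl
    rw [hPm, h, hsum0]
  have hfin : (Function.support fun e => lam e * c e).Finite := by
    refine Set.Finite.subset c.support.finite_toSet fun e he => ?_
    simp only [Function.mem_support] at he
    simp only [Finset.coe_sort_coe, Finset.mem_coe, Finsupp.mem_support_iff]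
    exact fun h0 => he (by rw [h0, mul_zero])
  set c' : (ℕ →₀ ℕ) →₀ K := Finsupp.ofSupportFinite _ hfin with hc'
  have hc'app : ∀ e, c' e = lam e * c e := fun e =>
    congrFun (Finsupp.ofSupportFinite_coe (hf := hfin)) e
  have hsub : c'.support ⊆ c.support := by
    intro e he
    rw [Finsupp.mem_support_iff] at he ⊢
    rw [hc'app] at he
    exact fun h0 => he (by rw [h0, mul_zero])
  have hsum' : f = c'.sum fun e a => MvPolynomial.C a * Pmon G e := by
    have h1 : act p.1 p.2 f = c.sum fun e a => MvPolynomial.C (lam e * a) * Pmon G e := by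
      conv_lhs => rw [hsum]
      rw [Finsupp.sum, map_sum, Finsupp.sum]
      refine Finset.sum_congr rfl fun e _ => ?_
      rw [map_mul, hactP e, smul_eq_C_mul, act_C]
      simp only [map_mul]
      ring
    have h2 : (c'.sum fun e a => MvPolynomial.C a * Pmon G e)
        = c.sum fun e a => MvPolynomial.C (lam e * a) * Pmon G e := by
      rw [Finsupp.sum_of_support_subset c' hsub _ (fun e _ => by simp), Finsupp.sum]
      exact Finset.sum_congr rfl fun e _ => by rw [hc'app]
    rw [h2, ← h1, hinv p hp]
  have hc'c : c' = c := huniq c' ⟨fun e he => hadm e (hsub he), hsum'⟩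
  have heq : lam e₀ * c e₀ = c e₀ := by
    rw [← hc'app, hc'c]
  exact mul_right_cancel₀ (Finsupp.mem_support_iff.mp he₀) (by rw [heq, one_mul])

lemma rel_cond (hG : IsGenSeq ν G) (heig : ∀ l, IsEigen α β i j t x (G.Q l))
    (l : ℕ) (hl : 1 ≤ l) :
    ∃ cc : ℕ → ℕ, ((G.mbar l : ℚ) * G.γ ν l = ∑ k ∈ Finset.range l, (cc k : ℚ) * G.γ ν k) ∧
      ∀ p : K × K, Hmem α β i j t x p →
        p.1 ^ cc 0 * p.2 ^ (∑ k ∈ Finset.range l, cc k * (if k = 0 then 0 else G.d k))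
          = p.2 ^ (G.mbar l * G.d l) := by
  obtain ⟨lam, hlam0, cc, hccb, hQe, hccval⟩ := hG.hrec l hl
  refine ⟨cc, hccval, ?_⟩
  intro p hp
  set Bp := ∏ k ∈ Finset.range l, G.Q k ^ cc k with hBp
  have hBne : MvPolynomial.C lam * Bp ≠ 0 := by
    refine mul_ne_zero (by simpa using hlam0) ?_
    exact Finset.prod_ne_zero_iff.mpr fun k _ => pow_ne_zero _ (Q_ne_zero hG k)
  have hact1 : act p.1 p.2 (G.Q (l+1)) = (p.2 ^ G.d (l+1)) • G.Q (l+1) := by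
    rw [act_Q hG heig hp (l+1), if_neg (by omega)]
  have hw := act_prodQ hG heig hp (Finset.range l) cc
  have hsum0 : (∑ k ∈ Finset.range l, if k = 0 then cc k else 0) = cc 0 := by
    rw [Finset.sum_ite_eq' _ 0 cc, if_pos (Finset.mem_range.mpr (by omega))]
  rw [hsum0] at hw
  set w := p.1 ^ cc 0 * p.2 ^ (∑ k ∈ Finset.range l, cc k * (if k = 0 then 0 else G.d k))
    with hwdef
  have hexp : act p.1 p.2 (G.Q (l+1))
      = (p.2 ^ (G.d l * G.mbar l)) • G.Q l ^ G.mbar l - MvPolynomial.C lam * (w • Bp) := by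
    rw [hQe, map_sub, map_mul, map_pow, act_Q hG heig hp l, if_neg (by omega), act_C, hBp,
      hw, smul_pow, ← pow_mul, ← hBp]
  have hd1 : G.d (l+1) = G.d l * G.mbar l := d_succ hG l hl
  rw [hact1, hQe, hd1, smul_sub] at hexp
  have hcancel : (p.2 ^ (G.d l * G.mbar l)) • (MvPolynomial.C lam * Bp)
      = MvPolynomial.C lam * (w • Bp) := sub_right_injective hexp
  rw [mul_smul_comm] at hcancel
  have hzero : ((p.2 ^ (G.d l * G.mbar l)) - w) • (MvPolynomial.C lam * Bp) = 0 := by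
    rw [sub_smul, hcancel, sub_self]
  rcases smul_eq_zero.mp hzero with h | h
  · rw [← sub_eq_zero]
    rw [sub_eq_zero] at h
    rw [← h, mul_comm (G.mbar l), sub_self]
  · exact absurd h hBne
/-- if `γ_1 = ν(Y)` lies in the value group of `ν̄` (the subgroup of `ℚ`
generated by the invariant valuation semigroup), then `n = j` and `t = 1`. -/
theorem stmt_19 (K : Type) [Field K] [IsAlgClosed K] [CharZero K]
    (m n : ℕ) (hm : 0 < m) (hn : 0 < n) (α β : K)
    (hα : IsPrimitiveRoot α m) (hβ : IsPrimitiveRoot β n)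
    (i j t x : ℕ) (hi : 0 < i) (hj : 0 < j) (ht : 0 < t)
    (him : i ∣ m) (hjn : j ∣ n) (hti : t ∣ m / i) (htj : t ∣ n / j)
    (hxt : Nat.gcd x t = 1) (hx1 : 1 ≤ x) (hxle : x ≤ t)
    (ν : RatVal (RF K)) (hdom : DominatesRm ν) (hnd : Nondiscrete ν)
    (G : GSData K) (hG : IsGenSeq ν G)
    (heig : ∀ l, IsEigen α β i j t x (G.Q l))
    (hgcd : Nat.gcd (m / i) (n / j) = t)
    (hmem : G.γ ν 1 ∈ AddSubgroup.closure (SA ν α β i j t x)) :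
    n = j ∧ t = 1 := by
  classical
  -- arithmetic setup
  obtain ⟨M, hM⟩ := him
  obtain ⟨N, hN⟩ := hjn
  have hMi : m / i = M := by rw [hM, Nat.mul_div_cancel_left M hi]
  have hNj : n / j = N := by rw [hN, Nat.mul_div_cancel_left N hj]
  rw [hMi] at hti
  rw [hNj] at htj
  have hM0 : 0 < M := by
    rcases Nat.eq_zero_or_pos M with h | h
    · rw [h, mul_zero] at hM; omega
    · exact h
  have hN0 : 0 < N := by
    rcases Nat.eq_zero_or_pos N with h | h
    · rw [h, mul_zero] at hN; omega
    · exact h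
  obtain ⟨m', hm'⟩ := hti
  obtain ⟨q, hq⟩ := htj
  have hm'0 : 0 < m' := by
    rcases Nat.eq_zero_or_pos m' with h | h
    · rw [h, mul_zero] at hm'; omega
    · exact h
  have hq0 : 0 < q := by
    rcases Nat.eq_zero_or_pos q with h | h
    · rw [h, mul_zero] at hq; omega
    · exact h
  -- primitive roots
  haveI : NeZero t := ⟨ht.ne'⟩
  have hα0 : α ≠ 0 := hα.ne_zero hm.ne'
  have hβ0 : β ≠ 0 := hβ.ne_zero hn.ne'
  have hζ : IsPrimitiveRoot (α ^ (i * m')) t := hα.pow hm (by rw [hM, hm']; ring)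
  have hη : IsPrimitiveRoot (β ^ (j * q)) t := hβ.pow hn (by rw [hN, hq]; ring)
  obtain ⟨y, hyt, hyη⟩ := hζ.eq_pow_of_pow_eq_one hη.pow_eq_one
  have hycop : Nat.Coprime y t := by
    refine (hζ.pow_iff_coprime ht y).mp ?_
    rwa [← hyη] at hη
  -- The key number-theoretic consequence of an eigenvalue identity
  have NT : ∀ (e₀ D₁ D₂ : ℕ),
      (∀ p : K × K, Hmem α β i j t x p → p.1 ^ e₀ * p.2 ^ D₁ = p.2 ^ D₂) →
      ((q:ℤ) ∣ ((D₁:ℤ) - (D₂:ℤ))) ∧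
      ((q:ℤ) * (M:ℤ) ∣ (q:ℤ) * (e₀:ℤ) + (m':ℤ) * (x:ℤ) * (y:ℤ) * ((D₁:ℤ) - (D₂:ℤ))) := by
    intro e₀ D₁ D₂ hC
    have key : ∀ (g : K) (z : ℤ) (dd : ℕ), (g ^ z) ^ dd = g ^ (z * dd) := fun g z dd => by
      rw [← zpow_natCast (g ^ z) dd, ← zpow_mul]
    have h1 : (q:ℤ) ∣ ((D₁:ℤ) - (D₂:ℤ)) := by
      have hp : Hmem α β i j t x ((α ^ ((0:ℤ) * (i:ℤ)), β ^ (((t:ℕ):ℤ) * (j:ℤ))) : K × K) :=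
        ⟨0, t, by rw [Int.modEq_iff_dvd]; simp, rfl⟩
      have hc1 := hC _ hp
      simp only [zero_mul, zpow_zero, one_pow, one_mul] at hc1
      rw [key, key] at hc1
      have h3 : β ^ (((t:ℤ) * j) * D₁ - ((t:ℤ) * j) * D₂) = 1 := by
        rw [zpow_sub₀ hβ0, hc1, div_self (zpow_ne_zero _ hβ0)]
      have h4 := (hβ.zpow_eq_one_iff_dvd _).mp h3
      have hn' : (n:ℤ) = ((j:ℤ) * t) * q := by rw [hN, hq]; push_cast; ring
      rw [hn'] at h4
      have h5 : ((j:ℤ) * t) * q ∣ ((j:ℤ) * t) * ((D₁:ℤ) - (D₂:ℤ)) := by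
        have he : ((t:ℤ) * j) * D₁ - ((t:ℤ) * j) * D₂ = ((j:ℤ) * t) * ((D₁:ℤ) - (D₂:ℤ)) := by
          ring
        rwa [he] at h4
      exact (mul_dvd_mul_iff_left (show ((j:ℤ) * t) ≠ 0 by positivity)).mp h5
    refine ⟨h1, ?_⟩
    obtain ⟨w, hw⟩ := h1
    have hp2 : Hmem α β i j t x ((α ^ ((1:ℤ) * (i:ℤ)), β ^ (((x:ℕ):ℤ) * (j:ℤ))) : K × K) :=
      ⟨1, x, by rw [Int.modEq_iff_dvd]; simp, rfl⟩
    have hc2 := hC _ hp2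
    simp only [one_mul] at hc2
    rw [key, key, key] at hc2
    have hA : α ^ ((i:ℤ) * e₀) * β ^ ((x:ℤ) * j * D₁ - (x:ℤ) * j * D₂) = 1 := by
      rw [zpow_sub₀ hβ0, ← mul_div_assoc, hc2, div_self (zpow_ne_zero _ hβ0)]
    have hE : (x:ℤ) * j * D₁ - (x:ℤ) * j * D₂ = ((j:ℤ) * q) * ((x:ℤ) * w) := by
      linear_combination ((x:ℤ) * (j:ℤ)) * hw
    rw [hE] at hA
    have hβjq : β ^ ((j:ℤ) * q) = α ^ (((i:ℤ) * m') * y) := by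
      rw [show ((j:ℤ) * q) = ((j * q : ℕ) : ℤ) by push_cast; ring, zpow_natCast, ← hyη,
        ← pow_mul, show (((i:ℤ) * m') * y) = ((i * m' * y : ℕ) : ℤ) by push_cast; ring,
        zpow_natCast]
    have hA2 : α ^ ((i:ℤ) * e₀ + (((i:ℤ) * m') * y) * ((x:ℤ) * w)) = 1 := by
      rw [zpow_add₀ hα0, ← hA]
      congr 1
      rw [zpow_mul β ((j:ℤ) * q) ((x:ℤ) * w), hβjq, ← zpow_mul]
    have h6 := (hα.zpow_eq_one_iff_dvd _).mp hA2
    have hm'' : (m:ℤ) = (i:ℤ) * (M:ℤ) := by rw [hM]; push_cast; ring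
    rw [hm''] at h6
    have h7 : (i:ℤ) * (M:ℤ) ∣ (i:ℤ) * ((e₀:ℤ) + (m':ℤ) * y * ((x:ℤ) * w)) := by
      have he : (i:ℤ) * ((e₀:ℤ) + (m':ℤ) * y * ((x:ℤ) * w))
          = (i:ℤ) * e₀ + ((i:ℤ) * m') * y * ((x:ℤ) * w) := by ring
      rwa [he]
    have hMdvd : (M:ℤ) ∣ ((e₀:ℤ) + (m':ℤ) * y * ((x:ℤ) * w)) :=
      (mul_dvd_mul_iff_left (show (i:ℤ) ≠ 0 by positivity)).mp h7
    have h8 : (q:ℤ) * (e₀:ℤ) + (m':ℤ) * x * y * ((D₁:ℤ) - (D₂:ℤ))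
        = (q:ℤ) * ((e₀:ℤ) + (m':ℤ) * y * ((x:ℤ) * w)) := by
      rw [hw]; ring
    rw [h8]
    exact mul_dvd_mul_left _ hMdvd
  -- base value positivity
  have hγ0 : 0 < G.γ ν 0 := by
    have h0 : G.γ ν 0 = vP ν (MvPolynomial.X 0) := by rw [GSData.γ, hG.hQ0]
    rw [h0]
    exact hdom.2 (MvPolynomial.X 0) (by exact MvPolynomial.X_ne_zero (σ := Fin 2) (R := K) 0)
      (by simp)
  -- the two additive congruence functionals
  set A : ℕ → ℤ := fun k => if k = 0 then 0 else (G.d k : ℤ) with hAdef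
  set B : ℕ → ℤ := fun k => if k = 0 then (q:ℤ) else (m':ℤ) * x * y * (G.d k : ℤ) with hBdef
  have hcast : ∀ (S : Finset ℕ) (cc : ℕ → ℕ),
      ((∑ k ∈ S, cc k * (if k = 0 then 0 else G.d k) : ℕ) : ℤ)
        = ∑ k ∈ S, (cc k : ℤ) * A k := by
    intro S cc
    push_cast
    refine Finset.sum_congr rfl fun k _ => ?_
    by_cases hk : k = 0 <;> simp [hk, hAdef]
  have hBsum : ∀ (S : Finset ℕ) (cc : ℕ → ℕ),
      ∑ k ∈ S, (cc k : ℤ) * B k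
        = (if 0 ∈ S then (q:ℤ) * cc 0 else 0)
          + (m':ℤ) * x * y * ∑ k ∈ S, (cc k : ℤ) * A k := by
    intro S cc
    have hpt : ∀ k ∈ S, (cc k : ℤ) * B k
        = (if k = 0 then (q:ℤ) * cc k else 0) + (m':ℤ) * x * y * ((cc k : ℤ) * A k) := by
      intro k _
      by_cases hk : k = 0
      · simp [hk, hAdef, hBdef]; ring
      · simp only [hAdef, hBdef, if_neg hk]; ring
    rw [Finset.sum_congr rfl hpt, Finset.sum_add_distrib, ← Finset.mul_sum,
      Finset.sum_ite_eq' S 0 (fun k => (q:ℤ) * cc k)]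
  -- relations among the values γ_k respect the congruence functionals
  have RR : ∀ (l : ℕ) (nn : ℕ → ℤ),
      (∑ k ∈ Finset.range (l+1), (nn k : ℚ) * G.γ ν k) = 0 →
      ((q:ℤ) ∣ ∑ k ∈ Finset.range (l+1), nn k * A k) ∧
      ((q:ℤ) * (M:ℤ) ∣ ∑ k ∈ Finset.range (l+1), nn k * B k) := by
    intro l
    induction l with
    | zero =>
      intro nn h
      rw [Finset.sum_range_one] at h
      have h0 : nn 0 = 0 := by
        rcases mul_eq_zero.mp h with h' | h'
        · exact_mod_cast h'
        · exact absurd h' hγ0.ne'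
      simp [Finset.sum_range_one, h0]
    | succ l ih =>
      intro nn hrel
      obtain ⟨cc, hccval, hcond⟩ := rel_cond hG heig (l+1) (by omega)
      have hmb : 0 < G.mbar (l+1) := hG.hmbar_pos _ (by omega)
      have hmb0 : (0:ℤ) < (G.mbar (l+1) : ℤ) := by exact_mod_cast hmb
      -- m̄_{l+1} divides nn (l+1)
      have hdvd : (G.mbar (l+1) : ℤ) ∣ nn (l+1) := by
        have hzrep : (nn (l+1) : ℚ) * G.γ ν (l+1)
            = ∑ k ∈ Finset.range (l+1), ((-nn k : ℤ) : ℚ) * G.γ ν k := by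
          rw [Finset.sum_range_succ] at hrel
          have hS : ∑ k ∈ Finset.range (l+1), ((-nn k : ℤ) : ℚ) * G.γ ν k
              = -∑ k ∈ Finset.range (l+1), (nn k : ℤ) * G.γ ν k := by
            rw [← Finset.sum_neg_distrib]
            exact Finset.sum_congr rfl fun k _ => by push_cast; ring
          rw [hS]
          linarith [hrel]
        set z := nn (l+1) with hzdef
        set mb : ℤ := (G.mbar (l+1) : ℤ) with hmbdef
        have hdm := Int.mul_ediv_add_emod z mb
        set r := z % mb with hr
        have hr0 : 0 ≤ r := Int.emod_nonneg z hmb0.ne'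
        have hrlt : r < mb := Int.emod_lt_of_pos z hmb0
        have hrrep : (r : ℚ) * G.γ ν (l+1)
            = ∑ k ∈ Finset.range (l+1), (((-nn k) - (z / mb) * cc k : ℤ) : ℚ) * G.γ ν k := by
          have hrq : (r:ℚ) = (z:ℚ) - (mb:ℚ) * ((z / mb : ℤ) : ℚ) := by
            have := congrArg (fun u : ℤ => (u:ℚ)) hdm
            push_cast at this
            linarith [this]
          have hmrg : (mb:ℚ) * ((z / mb : ℤ) : ℚ) * G.γ ν (l+1)
              = ((z / mb : ℤ) : ℚ) * ∑ k ∈ Finset.range (l+1), (cc k : ℚ) * G.γ ν k := by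
            rw [← hccval, hmbdef]
            push_cast
            ring
          rw [hrq, sub_mul, hzrep, hmrg, Finset.mul_sum, ← Finset.sum_sub_distrib]
          exact Finset.sum_congr rfl fun k _ => by push_cast; ring
        have hrz : r = 0 := by
          by_contra hrne
          have hrpos : 0 < r := lt_of_le_of_ne hr0 (Ne.symm hrne)
          have hrt : (0:ℕ) < r.toNat := by omega
          have hmin := hG.hmbar_min (l+1) (by omega) r.toNat hrt
            ⟨fun k => (-nn k) - (z / mb) * cc k, by
              rw [show ((r.toNat : ℕ) : ℚ) = (r : ℚ) by
                rw [← Int.cast_natCast, Int.toNat_of_nonneg hr0]]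
              exact hrrep⟩
          have : (G.mbar (l+1) : ℤ) ≤ r := by
            rw [← Int.toNat_of_nonneg hr0]
            exact_mod_cast hmin
          omega
        exact Int.dvd_of_emod_eq_zero hrz
      obtain ⟨s, hs⟩ := hdvd
      set nn' : ℕ → ℤ := fun k => nn k + s * cc k with hnn'
      have hrel' : ∑ k ∈ Finset.range (l+1), (nn' k : ℚ) * G.γ ν k = 0 := by
        have h1 : ∑ k ∈ Finset.range (l+1), (nn' k : ℚ) * G.γ ν k
            = ∑ k ∈ Finset.range (l+1), (nn k : ℚ) * G.γ ν k
              + (s:ℚ) * ∑ k ∈ Finset.range (l+1), (cc k : ℚ) * G.γ ν k := by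
          rw [Finset.mul_sum, ← Finset.sum_add_distrib]
          exact Finset.sum_congr rfl fun k _ => by simp only [hnn']; push_cast; ring
        rw [h1, ← hccval]
        rw [Finset.sum_range_succ] at hrel
        have hz : (nn (l+1) : ℚ) = (G.mbar (l+1) : ℚ) * (s:ℚ) := by exact_mod_cast hs
        linear_combination hrel - G.γ ν (l+1) * hz
      obtain ⟨ihA, ihB⟩ := ih nn' hrel'
      obtain ⟨hq1, hq2⟩ := NT (cc 0)
        (∑ k ∈ Finset.range (l+1), cc k * (if k = 0 then 0 else G.d k))
        (G.mbar (l+1) * G.d (l+1)) hcond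
      have hAc := hcast (Finset.range (l+1)) cc
      --∑ over range (l+2)
      constructor
      · have hsplit : ∑ k ∈ Finset.range (l+2), nn k * A k
            = ∑ k ∈ Finset.range (l+1), nn' k * A k
              + s * ((G.mbar (l+1) : ℤ) * A (l+1)
                - ∑ k ∈ Finset.range (l+1), (cc k : ℤ) * A k) := by
          have h2 : ∑ k ∈ Finset.range (l+1), nn' k * A k
              = ∑ k ∈ Finset.range (l+1), nn k * A k
                + s * ∑ k ∈ Finset.range (l+1), (cc k : ℤ) * A k := by
            rw [Finset.mul_sum, ← Finset.sum_add_distrib]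
            exact Finset.sum_congr rfl fun k _ => by simp only [hnn']; ring
          rw [Finset.sum_range_succ, h2, hs]
          ring
        rw [hsplit]
        refine dvd_add ihA (Dvd.dvd.mul_left ?_ s)
        have hAl : A (l+1) = (G.d (l+1) : ℤ) := by simp [hAdef]
        rw [hAl, ← hAc]
        have : (G.mbar (l+1) : ℤ) * (G.d (l+1) : ℤ)
            - ((∑ k ∈ Finset.range (l+1), cc k * (if k = 0 then 0 else G.d k) : ℕ) : ℤ)
            = -( ((∑ k ∈ Finset.range (l+1), cc k * (if k = 0 then 0 else G.d k) : ℕ) : ℤ)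
              - ((G.mbar (l+1) * G.d (l+1) : ℕ) : ℤ)) := by push_cast; ring
        rw [this]
        exact dvd_neg.mpr hq1
      · have hsplit : ∑ k ∈ Finset.range (l+2), nn k * B k
            = ∑ k ∈ Finset.range (l+1), nn' k * B k
              + s * ((G.mbar (l+1) : ℤ) * B (l+1)
                - ∑ k ∈ Finset.range (l+1), (cc k : ℤ) * B k) := by
          have h2 : ∑ k ∈ Finset.range (l+1), nn' k * B k
              = ∑ k ∈ Finset.range (l+1), nn k * B k
                + s * ∑ k ∈ Finset.range (l+1), (cc k : ℤ) * B k := by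
            rw [Finset.mul_sum, ← Finset.sum_add_distrib]
            exact Finset.sum_congr rfl fun k _ => by simp only [hnn']; ring
          rw [Finset.sum_range_succ, h2, hs]
          ring
        rw [hsplit]
        refine dvd_add ihB (Dvd.dvd.mul_left ?_ s)
        have hBl : B (l+1) = (m':ℤ) * x * y * (G.d (l+1) : ℤ) := by simp [hBdef]
        rw [hBl, hBsum (Finset.range (l+1)) cc,
          if_pos (Finset.mem_range.mpr (show 0 < l+1 by omega)), ← hAc]
        have hfin : (G.mbar (l+1) : ℤ) * ((m':ℤ) * x * y * (G.d (l+1) : ℤ))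
            - ((q:ℤ) * cc 0 + (m':ℤ) * x * y
              * ((∑ k ∈ Finset.range (l+1), cc k * (if k = 0 then 0 else G.d k) : ℕ) : ℤ))
            = -((q:ℤ) * (cc 0) + (m':ℤ) * x * y
              * (((∑ k ∈ Finset.range (l+1), cc k * (if k = 0 then 0 else G.d k) : ℕ) : ℤ)
                - ((G.mbar (l+1) * G.d (l+1) : ℕ) : ℤ))) := by push_cast; ring
        rw [hfin]
        exact dvd_neg.mpr hq2
  -- the predicate for closure induction
  set P : ℚ → Prop := fun z => ∃ nn : ℕ →₀ ℤ,
      z = nn.sum (fun k c => (c:ℚ) * G.γ ν k)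
      ∧ ((q:ℤ) ∣ nn.sum fun k c => c * A k)
      ∧ ((q:ℤ) * (M:ℤ) ∣ nn.sum fun k c => c * B k) with hPdef
  have hP0 : P 0 := ⟨0, by simp, by simp, by simp⟩
  have hPadd : ∀ a b : ℚ, P a → P b → P (a + b) := by
    rintro a b ⟨na, ha1, ha2, ha3⟩ ⟨nb, hb1, hb2, hb3⟩
    refine ⟨na + nb, ?_, ?_, ?_⟩
    · rw [Finsupp.sum_add_index' (fun k => by simp) (fun k c1 c2 => by push_cast; ring),
        ha1, hb1]
    · rw [Finsupp.sum_add_index' (fun k => by simp) (fun k c1 c2 => by ring)]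
      exact dvd_add ha2 hb2
    · rw [Finsupp.sum_add_index' (fun k => by simp) (fun k c1 c2 => by ring)]
      exact dvd_add ha3 hb3
  have hPsub : ∀ a b : ℚ, P a → P b → P (a - b) := by
    rintro a b ⟨na, ha1, ha2, ha3⟩ ⟨nb, hb1, hb2, hb3⟩
    refine ⟨na - nb, ?_, ?_, ?_⟩
    · rw [Finsupp.sum_sub_index (fun k c1 c2 => by push_cast; ring), ha1, hb1]
    · rw [Finsupp.sum_sub_index (fun k c1 c2 => by ring)]
      exact dvd_sub ha2 hb2
    · rw [Finsupp.sum_sub_index (fun k c1 c2 => by ring)]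
      exact dvd_sub ha3 hb3
  have hPmon : ∀ e : ℕ →₀ ℕ,
      (∀ p : K × K, Hmem α β i j t x p →
        p.1 ^ e 0 * p.2 ^ (∑ k ∈ e.support, e k * (if k = 0 then 0 else G.d k)) = 1) →
      P (evalγ ν G e) := by
    intro e hcond
    obtain ⟨hd1, hd2⟩ := NT (e 0)
      (∑ k ∈ e.support, e k * (if k = 0 then 0 else G.d k)) 0
      (fun p hp => by rw [pow_zero]; exact hcond p hp)
    refine ⟨e.mapRange (fun a : ℕ => (a : ℤ)) (by simp), ?_, ?_, ?_⟩
    · rw [Finsupp.sum_mapRange_index (fun k => by simp)]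
      rw [evalγ]
      exact Finsupp.sum_congr fun k _ => by push_cast; ring
    · rw [Finsupp.sum_mapRange_index (fun k => by simp)]
      have h1 : (e.sum fun k a => (a:ℤ) * A k) = ∑ k ∈ e.support, (e k : ℤ) * A k := rfl
      rw [h1, ← hcast e.support e]
      simpa using hd1
    · rw [Finsupp.sum_mapRange_index (fun k => by simp)]
      have h2 : (e.sum fun k a => (a:ℤ) * B k) = ∑ k ∈ e.support, (e k : ℤ) * B k := rfl
      rw [h2, hBsum e.support e]
      have h3 : (if 0 ∈ e.support then (q:ℤ) * e 0 else 0) = (q:ℤ) * e 0 := by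
        by_cases h0 : 0 ∈ e.support
        · rw [if_pos h0]
        · rw [if_neg h0, Finsupp.notMem_support_iff.mp h0]; simp
      rw [h3, ← hcast e.support e]
      simpa using hd2
  have hPmemSA : ∀ z ∈ SA ν α β i j t x, P z := by
    rintro z ⟨f, g, hf0, hfi, hgi, hgc, hzeq⟩
    have hg0' : g ≠ 0 := fun h => hgc (by rw [h]; simp)
    obtain ⟨ef, hvf, hcf⟩ := invariant_value hG heig f hf0 hfi
    obtain ⟨eg, hvg, hcg⟩ := invariant_value hG heig g hg0' hgi
    rw [hzeq, hvf, hvg]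
    exact hPsub _ _ (hPmon ef hcf) (hPmon eg hcg)
  have hPγ1 : P (G.γ ν 1) := by
    refine AddSubgroup.closure_induction (p := fun z _ => P z)
      (fun z hz => hPmemSA z hz) hP0 (fun a b _ _ ha hb => hPadd a b ha hb)
      (fun a _ ha => ?_) hmem
    have := hPsub 0 a hP0 ha
    rwa [zero_sub] at this
  -- extract the final congruences
  obtain ⟨nn, hz1, hzA, hzB⟩ := hPγ1
  set L := nn.support.sup id + 1 with hLdef
  have hsupp : nn.support ⊆ Finset.range (L+1) := by
    intro k hk
    have : k ≤ nn.support.sup id := Finset.le_sup (f := id) hk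
    exact Finset.mem_range.mpr (by omega)
  have hzr : ∑ k ∈ Finset.range (L+1), (nn k : ℚ) * G.γ ν k = G.γ ν 1 := by
    have h := Finsupp.sum_of_support_subset nn hsupp
      (fun k c => (c:ℚ) * G.γ ν k) (fun k _ => by simp)
    rw [hz1, h]
  have hzAr : (q:ℤ) ∣ ∑ k ∈ Finset.range (L+1), nn k * A k := by
    rw [← Finsupp.sum_of_support_subset nn hsupp (fun k c => c * A k) (fun k _ => by simp)]
    exact hzA
  have hzBr : (q:ℤ) * (M:ℤ) ∣ ∑ k ∈ Finset.range (L+1), nn k * B k := by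
    rw [← Finsupp.sum_of_support_subset nn hsupp (fun k c => c * B k) (fun k _ => by simp)]
    exact hzB
  set rr : ℕ → ℤ := fun k => nn k - (if k = 1 then 1 else 0) with hrrdef
  have h1mem : 1 ∈ Finset.range (L+1) := Finset.mem_range.mpr (by omega)
  have hrel : ∑ k ∈ Finset.range (L+1), (rr k : ℚ) * G.γ ν k = 0 := by
    have hsplit : ∀ k ∈ Finset.range (L+1), (rr k : ℚ) * G.γ ν k
        = (nn k : ℚ) * G.γ ν k - (if k = 1 then G.γ ν k else 0) := by
      intro k _
      by_cases hk : k = 1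
      · simp only [hrrdef, hk, if_pos rfl]; push_cast; ring
      · simp only [hrrdef, if_neg hk]; push_cast; ring
    rw [Finset.sum_congr rfl hsplit, Finset.sum_sub_distrib,
      Finset.sum_ite_eq' (Finset.range (L+1)) 1 (fun k => G.γ ν k), if_pos h1mem, hzr]
    ring
  obtain ⟨hA1, hB1⟩ := RR L rr hrel
  have hAfin : (q:ℤ) ∣ A 1 := by
    have hsplit : ∀ k ∈ Finset.range (L+1), rr k * A k
        = nn k * A k - (if k = 1 then A k else 0) := by
      intro k _
      by_cases hk : k = 1
      · simp only [hrrdef, hk, eq_self_iff_true, if_true]; ring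
      · simp only [hrrdef, if_neg hk]; ring
    rw [Finset.sum_congr rfl hsplit, Finset.sum_sub_distrib,
      Finset.sum_ite_eq' (Finset.range (L+1)) 1 (fun k => A k), if_pos h1mem] at hA1
    have := dvd_sub hzAr hA1
    simpa using this
  have hBfin : (q:ℤ) * (M:ℤ) ∣ B 1 := by
    have hsplit : ∀ k ∈ Finset.range (L+1), rr k * B k
        = nn k * B k - (if k = 1 then B k else 0) := by
      intro k _
      by_cases hk : k = 1
      · simp only [hrrdef, hk, eq_self_iff_true, if_true]; ring
      · simp only [hrrdef, if_neg hk]; ring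
    rw [Finset.sum_congr rfl hsplit, Finset.sum_sub_distrib,
      Finset.sum_ite_eq' (Finset.range (L+1)) 1 (fun k => B k), if_pos h1mem] at hB1
    have := dvd_sub hzBr hB1
    simpa using this
  -- conclude q = 1
  have hA1v : A 1 = 1 := by simp [hAdef, d_one]
  have hq1 : q = 1 := by
    rw [hA1v] at hAfin
    have h1 : (q:ℕ) ∣ 1 := by exact_mod_cast hAfin
    exact Nat.dvd_one.mp h1
  -- conclude t = 1
  have hB1v : B 1 = (m':ℤ) * x * y := by simp [hBdef, d_one]
  have ht1 : t = 1 := by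
    rw [hB1v, hq1] at hBfin
    have h1 : (M:ℤ) ∣ (m':ℤ) * x * y := by simpa using hBfin
    have h2 : (M:ℕ) ∣ m' * (x * y) := by
      have h3 : ((m' * (x * y) : ℕ) : ℤ) = (m':ℤ) * x * y := by push_cast; ring
      exact_mod_cast h3 ▸ h1
    rw [hm', mul_comm t m'] at h2
    have h4 : t ∣ x * y := (Nat.mul_dvd_mul_iff_left hm'0).mp h2
    have h5 : t ∣ y := (Nat.Coprime.symm hxt).dvd_of_dvd_mul_left h4
    exact (Nat.Coprime.symm hycop).eq_one_of_dvd h5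
  refine ⟨?_, ht1⟩
  rw [hN, hq, ht1, hq1]
  simp

end DuttaPaper
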